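/- The limit lim_{n→∞} (1/n) Σ_{i=1}^n {n/i} exists and equals 1 − γ, where γ is the Euler–Mascheroni constant. -/

import Mathlib

open Filter Topology MeasureTheory Set

noncomputable def fractStep (n : ℕ) (x : ℝ) : ℝ :=
  Int.fract ((n : ℝ) / (⌈(n : ℝ) * x⌉ : ℤ))

lemma measurable_fractStep (n : ℕ) : Measurable (fractStep n) := by
  unfold fractStep
  apply measurable_fract.comp
  apply measurable_const.div
  exact Measurable.comp (measurable_from_top) ((measurable_id.const_mul _).ceil)

lemma integral_fractStep {n : ℕ} (hn : 0 < n) :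
    ∫ x in Ioc (0:ℝ) 1, fractStep n x
      = (1 / (n : ℝ)) * ∑ i ∈ Finset.Icc 1 n, Int.fract ((n : ℝ) / i) := by
  have hn' : (0:ℝ) < n := by exact_mod_cast hn
  have hstep : ∀ k : ℕ, ∀ x ∈ Ioc ((k:ℝ)/n) (((k+1:ℕ):ℝ)/n),
      fractStep n x = Int.fract ((n : ℝ) / (k+1 : ℕ)) := by
    intro k x hx
    have h1 : ((k:ℝ)) < n * x := by
      have := hx.1
      calc (k:ℝ) = n * ((k:ℝ)/n) := by field_simp
      _ < n * x := by exact mul_lt_mul_of_pos_left this hn'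
    have h2 : n * x ≤ ((k:ℝ)+1) := by
      have := hx.2
      push_cast at this
      calc (n:ℝ) * x ≤ n * (((k:ℝ)+1)/n) := mul_le_mul_of_nonneg_left this hn'.le
      _ = (k:ℝ)+1 := by field_simp
    have hceil : ⌈(n : ℝ) * x⌉ = (k:ℤ)+1 := by
      rw [Int.ceil_eq_iff]
      constructor
      · push_cast; linarith
      · push_cast; linarith
    unfold fractStep
    rw [hceil]
    push_cast
    norm_num
  have hle : ∀ k : ℕ, ((k:ℕ):ℝ)/n ≤ (((k+1:ℕ)):ℝ)/n := by
    intro k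
    apply div_le_div_of_nonneg_right ?_ hn'.le
    push_cast; linarith
  have hint : ∀ k : ℕ, k < n → IntervalIntegrable (fractStep n) volume
      ((fun k : ℕ => ((k:ℕ):ℝ)/n) k) ((fun k : ℕ => ((k:ℕ):ℝ)/n) (k+1)) := by
    intro k _
    rw [intervalIntegrable_iff_integrableOn_Ioc_of_le (hle k)]
    have hc : IntegrableOn (fun _ : ℝ => Int.fract ((n : ℝ) / (k+1 : ℕ)))
        (Ioc (((k:ℕ):ℝ)/n) (((k+1:ℕ):ℝ)/n)) volume := by
      apply (integrableOn_const_iff (by finiteness)).mpr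
      right
      simp [Real.volume_Ioc]
    exact hc.congr_fun (fun x hx => (hstep k x hx).symm) measurableSet_Ioc
  have hsum := intervalIntegral.sum_integral_adjacent_intervals (μ := volume) hint
  have h0 : ((0:ℕ):ℝ)/n = 0 := by simp
  have h1 : ((n:ℕ):ℝ)/n = 1 := by field_simp
  rw [h0, h1] at hsum
  have hpiece : ∀ k ∈ Finset.range n,
      ∫ x in (((k:ℕ):ℝ)/n)..((((k+1:ℕ)):ℝ)/n), fractStep n x
        = (1/(n:ℝ)) * Int.fract ((n : ℝ) / (k+1 : ℕ)) := by
    intro k _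
    rw [intervalIntegral.integral_of_le (hle k),
      setIntegral_congr_fun measurableSet_Ioc (hstep k), setIntegral_const]
    simp only [Real.volume_Ioc, smul_eq_mul]
    rw [Real.volume_real_Ioc, max_eq_left]
    · congr 1
      push_cast
      field_simp
      ring
    · have := hle k
      linarith
  rw [show (∫ x in Ioc (0:ℝ) 1, fractStep n x)
      = ∫ x in (0:ℝ)..1, fractStep n x from
      (intervalIntegral.integral_of_le zero_le_one).symm,
    ← hsum, Finset.sum_congr rfl hpiece, ← Finset.mul_sum]
  congr 1
  have hIcc : Finset.Icc 1 n = Finset.Ico 1 (n+1) := rfl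
  rw [hIcc, Finset.sum_Ico_eq_sum_range]
  simp only [Nat.add_sub_cancel]
  apply Finset.sum_congr rfl
  intro k _
  congr 2
  push_cast
  ring

lemma tendsto_fractStep {x : ℝ} (hx : 0 < x) (h : ∀ m : ℤ, x⁻¹ ≠ (m:ℝ)) :
    Tendsto (fun n : ℕ => fractStep n x) atTop (𝓝 (Int.fract x⁻¹)) := by
  have h1 : Tendsto (fun n : ℕ => ((⌈(n:ℝ) * x⌉ : ℝ)) / n) atTop (𝓝 x) := by
    refine tendsto_of_tendsto_of_tendsto_of_le_of_le'
      (g := fun _ : ℕ => x) (h := fun n : ℕ => x + 1/n) tendsto_const_nhds ?_ ?_ ?_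
    · simpa using (tendsto_const_nhds (x := x)).add
        (tendsto_one_div_atTop_nhds_zero_nat)
    · filter_upwards [eventually_ge_atTop 1] with n hn
      have hn' : (0:ℝ) < n := by exact_mod_cast hn
      rw [le_div_iff₀ hn']
      calc x * n = n * x := by ring
      _ ≤ ⌈(n:ℝ) * x⌉ := Int.le_ceil _
    · filter_upwards [eventually_ge_atTop 1] with n hn
      have hn' : (0:ℝ) < n := by exact_mod_cast hn
      rw [div_le_iff₀ hn']
      have h2 := (Int.ceil_lt_add_one ((n:ℝ)*x)).le
      calc (⌈(n:ℝ)*x⌉:ℝ) ≤ n * x + 1 := h2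
      _ = (x + 1/n) * n := by field_simp
  have h2 : Tendsto (fun n : ℕ => (n : ℝ) / (⌈(n:ℝ) * x⌉ : ℤ)) atTop (𝓝 x⁻¹) := by
    refine (h1.inv₀ hx.ne').congr' ?_
    filter_upwards [eventually_ge_atTop 1] with n hn
    rw [inv_div]
  have hne : x⁻¹ ≠ (⌊x⁻¹⌋ : ℝ) := h ⌊x⁻¹⌋
  exact ((continuousAt_fract hne).tendsto.comp h2 : _)

lemma integrableOn_fract_inv : IntegrableOn (fun x : ℝ => Int.fract x⁻¹) (Ioc (0:ℝ) 1) := by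
  have hmeas : Measurable fun x : ℝ => Int.fract x⁻¹ :=
    measurable_fract.comp measurable_inv
  rw [IntegrableOn, ← memLp_one_iff_integrable]
  apply MemLp.of_bound hmeas.aestronglyMeasurable 1
  filter_upwards with x
  rw [Real.norm_eq_abs, abs_of_nonneg (Int.fract_nonneg _)]
  exact (Int.fract_lt_one _).le

open intervalIntegral in
lemma integral_fract_inv_piece (k : ℕ) :
    ∫ x in (1/((k:ℝ)+2))..(1/((k:ℝ)+1)), Int.fract x⁻¹
      = Real.log ((k:ℝ)+2) - Real.log ((k:ℝ)+1) - 1/((k:ℝ)+2) := by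
  have hk1 : (0:ℝ) < (k:ℝ)+1 := by positivity
  have hk2 : (0:ℝ) < (k:ℝ)+2 := by positivity
  have hle : 1/((k:ℝ)+2) ≤ 1/((k:ℝ)+1) := by
    apply one_div_le_one_div_of_le hk1; linarith
  have hposIcc : ∀ x ∈ uIcc (1/((k:ℝ)+2)) (1/((k:ℝ)+1)), (0:ℝ) < x := by
    intro x hx
    have hmin : (0:ℝ) < min (1/((k:ℝ)+2)) (1/((k:ℝ)+1)) := lt_min (by positivity) (by positivity)
    exact hmin.trans_le hx.1
  have heq : ∀ x ∈ Ioc (1/((k:ℝ)+2)) (1/((k:ℝ)+1)),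
      Int.fract x⁻¹ = x⁻¹ - ((k:ℝ)+1) := by
    intro x hx
    have hx0 : 0 < x := lt_trans (by positivity) hx.1
    have hxi1 : (k:ℝ)+1 ≤ x⁻¹ := by
      rw [le_inv_comm₀ hk1 hx0]
      simpa [one_div] using hx.2
    have hxi2 : x⁻¹ < (k:ℝ)+2 := by
      rw [inv_lt_comm₀ hx0 hk2]
      simpa [one_div] using hx.1
    have hfl : ⌊x⁻¹⌋ = (k:ℤ)+1 := by
      rw [Int.floor_eq_iff]
      constructor
      · push_cast; exact hxi1
      · push_cast; linarith
    rw [Int.fract, hfl]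
    push_cast
    ring
  rw [intervalIntegral.integral_of_le hle,
    setIntegral_congr_fun measurableSet_Ioc heq,
    ← intervalIntegral.integral_of_le hle]
  have hint1 : IntervalIntegrable (fun x : ℝ => x⁻¹) volume (1/((k:ℝ)+2)) (1/((k:ℝ)+1)) :=
    intervalIntegrable_inv (fun x hx => (hposIcc x hx).ne') continuousOn_id
  rw [integral_sub hint1 intervalIntegrable_const,
    integral_inv (fun h => absurd (hposIcc 0 h) (lt_irrefl 0)),
    _root_.intervalIntegral.integral_const, smul_eq_mul]
  rw [show (1/((k:ℝ)+1)) / (1/((k:ℝ)+2)) = ((k:ℝ)+2)/((k:ℝ)+1) by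
      field_simp,
    Real.log_div hk2.ne' hk1.ne']
  field_simp
  ring

lemma integral_fract_inv_telescope (m : ℕ) :
    ∫ x in (1/((m:ℝ)+1))..1, Int.fract x⁻¹
      = 1 - (((harmonic (m+1) : ℚ) : ℝ) - Real.log ((m:ℝ)+1)) := by
  induction m with
  | zero =>
    norm_num [harmonic_succ, harmonic_zero]
  | succ m ih =>
    have hle1 : 1/((m:ℝ)+2) ≤ 1/((m:ℝ)+1) := by
      apply one_div_le_one_div_of_le (by positivity); linarith
    have hle2 : 1/((m:ℝ)+1) ≤ 1 := by
      rw [div_le_one (by positivity)]; linarith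
    have hsub : ∀ a b : ℝ, 0 ≤ a → b ≤ 1 → Ioc a b ⊆ Ioc (0:ℝ) 1 :=
      fun a b ha hb => Ioc_subset_Ioc ha hb
    have hint1 : IntervalIntegrable (fun x : ℝ => Int.fract x⁻¹) volume
        (1/((m:ℝ)+2)) (1/((m:ℝ)+1)) := by
      rw [intervalIntegrable_iff_integrableOn_Ioc_of_le hle1]
      exact integrableOn_fract_inv.mono_set (hsub _ _ (by positivity) hle2)
    have hint2 : IntervalIntegrable (fun x : ℝ => Int.fract x⁻¹) volume
        (1/((m:ℝ)+1)) 1 := by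
      rw [intervalIntegrable_iff_integrableOn_Ioc_of_le hle2]
      exact integrableOn_fract_inv.mono_set (hsub _ _ (by positivity) le_rfl)
    have hadd := intervalIntegral.integral_add_adjacent_intervals hint1 hint2
    have hcast : ((m+1:ℕ):ℝ) + 1 = (m:ℝ) + 2 := by push_cast; ring
    rw [hcast, ← hadd, integral_fract_inv_piece m, ih, harmonic_succ (m+1)]
    push_cast
    ring

theorem tendsto_average_fract_n_div_i :
    Tendsto
      (fun n : ℕ => (1 / (n : ℝ)) * ∑ i ∈ Finset.Icc 1 n, Int.fract ((n : ℝ) / i))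
      atTop (𝓝 (1 - Real.eulerMascheroniConstant)) := by
  -- Step 1 : the integral ∫_{(0,1]} fract x⁻¹ equals 1 - γ
  have hunion : (⋃ m : ℕ, Ioc (1/((m:ℝ)+1)) 1) = Ioc (0:ℝ) 1 := by
    ext x
    simp only [mem_iUnion, mem_Ioc]
    constructor
    · rintro ⟨m, hm1, hm2⟩
      exact ⟨lt_trans (by positivity) hm1, hm2⟩
    · rintro ⟨h1, h2⟩
      obtain ⟨m, hm⟩ := exists_nat_one_div_lt h1
      exact ⟨m, hm, h2⟩
  have hmono : Monotone fun m : ℕ => Ioc (1/((m:ℝ)+1)) 1 := by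
    intro a b hab
    apply Ioc_subset_Ioc_left
    apply one_div_le_one_div_of_le (by positivity)
    have : (a:ℝ) ≤ b := by exact_mod_cast hab
    linarith
  have hL := tendsto_setIntegral_of_monotone (fun m : ℕ => measurableSet_Ioc) hmono
    (hunion ▸ integrableOn_fract_inv)
  rw [hunion] at hL
  have hJ : ∀ m : ℕ, (∫ x in Ioc (1/((m:ℝ)+1)) 1, Int.fract x⁻¹)
      = 1 - (((harmonic (m+1) : ℚ) : ℝ) - Real.log ((m:ℝ)+1)) := by
    intro m
    have hle2 : 1/((m:ℝ)+1) ≤ 1 := by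
      rw [div_le_one (by positivity)]; linarith
    rw [← intervalIntegral.integral_of_le hle2]
    exact integral_fract_inv_telescope m
  have hγ : Tendsto (fun m : ℕ => 1 - (((harmonic (m+1) : ℚ) : ℝ) - Real.log ((m:ℝ)+1)))
      atTop (𝓝 (1 - Real.eulerMascheroniConstant)) := by
    apply Tendsto.const_sub
    have h := Real.tendsto_harmonic_sub_log.comp (tendsto_add_atTop_nat 1)
    refine h.congr fun m => ?_
    simp only [Function.comp]
    push_cast
    ring_nf
  have hLeq : (∫ x in Ioc (0:ℝ) 1, Int.fract x⁻¹) = 1 - Real.eulerMascheroniConstant :=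
    tendsto_nhds_unique (hL.congr hJ) hγ
  -- Step 2 : dominated convergence
  have hmeasF : ∀ n : ℕ, AEStronglyMeasurable (fractStep n) (volume.restrict (Ioc (0:ℝ) 1)) :=
    fun n => (measurable_fractStep n).aestronglyMeasurable
  have hboundInt : Integrable (fun _ : ℝ => (1:ℝ)) (volume.restrict (Ioc (0:ℝ) 1)) := by
    apply (integrableOn_const_iff (by finiteness)).mpr
    right
    simp [Real.volume_Ioc]
  have hbound : ∀ n : ℕ, ∀ᵐ x ∂(volume.restrict (Ioc (0:ℝ) 1)), ‖fractStep n x‖ ≤ 1 := by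
    intro n
    filter_upwards with x
    rw [Real.norm_eq_abs, abs_of_nonneg (Int.fract_nonneg _)]
    exact (Int.fract_lt_one _).le
  have hnull : volume (range fun m : ℤ => ((m:ℝ))⁻¹) = 0 :=
    (countable_range _).measure_zero _
  have hconv : ∀ᵐ x ∂(volume.restrict (Ioc (0:ℝ) 1)),
      Tendsto (fun n : ℕ => fractStep n x) atTop (𝓝 (Int.fract x⁻¹)) := by
    rw [ae_restrict_iff' measurableSet_Ioc]
    filter_upwards [measure_eq_zero_iff_ae_notMem.mp hnull] with x hx hmem
    apply tendsto_fractStep hmem.1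
    intro m hm
    exact hx ⟨m, show ((m:ℝ))⁻¹ = x by rw [← hm, inv_inv]⟩
  have hDCT := MeasureTheory.tendsto_integral_of_dominated_convergence
    (μ := volume.restrict (Ioc (0:ℝ) 1)) (F := fun n => fractStep n)
    (f := fun x => Int.fract x⁻¹) (fun _ => (1:ℝ)) hmeasF hboundInt hbound hconv
  rw [show (∫ x, Int.fract x⁻¹ ∂(volume.restrict (Ioc (0:ℝ) 1)))
      = ∫ x in Ioc (0:ℝ) 1, Int.fract x⁻¹ from rfl, hLeq] at hDCT
  refine hDCT.congr' ?_
  filter_upwards [eventually_ge_atTop 1] with n hn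
  exact integral_fractStep hn
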